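/- arXiv:2303.13485 — 2 statements merged into one kernel-verified Lean document; each statement's English description precedes it below -/
import Mathlib

section
/- For Ỹ ~ Erlang(K, μ), θ > 0, and threshold waiting policy w(y) = (τ - y)⁺, the Laplace-type functional L(τ) = E[e^{-2θ(w(Ỹ)+Ỹ)}] equals e^{-2θτ}·γ(μτ, K) + (μ/(μ+2θ))^K · (1 - γ((2θ+μ)τ, K)). -/
open Real MeasureTheory

/-- The regularized lower incomplete Gamma function
`γ(x, n) = (1/(n-1)!) ∫₀ˣ t^{n-1} e^{-t} dt`. -/
noncomputable def regGamma (x : ℝ) (n : ℕ) : ℝ :=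
  (1 / ((n - 1).factorial : ℝ)) * ∫ t in (0 : ℝ)..x, t ^ (n - 1) * Real.exp (-t)

open Set in
lemma base_integrable_aux (n : ℕ) :
    IntegrableOn (fun y : ℝ => y ^ n * Real.exp (-y)) (Ioi 0) := by
  have h := Real.GammaIntegral_convergent (s := (n : ℝ) + 1) (by positivity)
  apply h.congr_fun ?_ measurableSet_Ioi
  intro x hx
  dsimp only
  rw [show ((n : ℝ) + 1 - 1) = ((n : ℕ) : ℝ) by ring, Real.rpow_natCast, mul_comm]

open Set in
lemma integrableOn_pow_exp_aux (n : ℕ) {c : ℝ} (hc : 0 < c) :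
    IntegrableOn (fun y : ℝ => y ^ n * Real.exp (-(c * y))) (Ioi 0) := by
  have h := (integrableOn_Ioi_comp_mul_left_iff
      (fun y : ℝ => y ^ n * Real.exp (-y)) 0 hc).mpr
      (by simpa using base_integrable_aux n)
  have h2 : IntegrableOn (fun x : ℝ => ((c : ℝ) ^ n)⁻¹ * ((c * x) ^ n * Real.exp (-(c * x))))
      (Ioi 0) := h.const_mul ((c : ℝ) ^ n)⁻¹
  apply IntegrableOn.congr_fun h2 ?_ measurableSet_Ioi
  intro x _
  dsimp only
  rw [mul_pow, show ((c : ℝ) ^ n)⁻¹ * (c ^ n * x ^ n * Real.exp (-(c * x)))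
      = (((c : ℝ) ^ n)⁻¹ * c ^ n) * (x ^ n * Real.exp (-(c * x))) by ring,
    inv_mul_cancel₀ (by positivity), one_mul]

open Set in
lemma total_integral_aux (n : ℕ) {c : ℝ} (hc : 0 < c) :
    ∫ y in Ioi (0 : ℝ), y ^ n * Real.exp (-(c * y))
      = (n.factorial : ℝ) / c ^ (n + 1) := by
  have h := Real.integral_rpow_mul_exp_neg_mul_Ioi (a := (n : ℝ) + 1) (by positivity) hc
  have e1 : ∫ t in Ioi (0 : ℝ), t ^ ((n : ℝ) + 1 - 1) * Real.exp (-(c * t))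
      = ∫ y in Ioi (0 : ℝ), y ^ n * Real.exp (-(c * y)) := by
    apply setIntegral_congr_fun measurableSet_Ioi
    intro x hx
    dsimp only
    rw [show ((n : ℝ) + 1 - 1) = ((n : ℕ) : ℝ) by ring, Real.rpow_natCast]
  rw [e1] at h
  rw [h, show ((n : ℝ) + 1) = (((n + 1 : ℕ)) : ℝ) by push_cast; ring, Real.rpow_natCast,
    show (((n + 1 : ℕ)) : ℝ) = (n : ℝ) + 1 by push_cast; ring,
    Real.Gamma_nat_eq_factorial, div_pow, one_pow]
  ring

lemma interval_scale_aux (n : ℕ) {c : ℝ} (hc : 0 < c) (x : ℝ) :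
    ∫ y in (0 : ℝ)..x, y ^ n * Real.exp (-(c * y))
      = (c ^ (n + 1))⁻¹ * ∫ t in (0 : ℝ)..(c * x), t ^ n * Real.exp (-t) := by
  have h := intervalIntegral.integral_comp_mul_left
    (a := (0 : ℝ)) (b := x) (fun t => t ^ n * Real.exp (-t)) hc.ne'
  simp only [mul_zero] at h
  have e1 : ∫ y in (0 : ℝ)..x, (c * y) ^ n * Real.exp (-(c * y))
      = c ^ n * ∫ y in (0 : ℝ)..x, y ^ n * Real.exp (-(c * y)) := by
    rw [← intervalIntegral.integral_const_mul]
    apply intervalIntegral.integral_congr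
    intro y _
    dsimp only
    rw [mul_pow]; ring
  rw [e1] at h
  rw [smul_eq_mul] at h
  have h3 : (c ^ n)⁻¹ * (c ^ n * ∫ y in (0:ℝ)..x, y ^ n * Real.exp (-(c * y)))
      = (c ^ n)⁻¹ * (c⁻¹ * ∫ t in (0:ℝ)..(c * x), t ^ n * Real.exp (-t)) := by rw [h]
  rw [← mul_assoc, inv_mul_cancel₀ (by positivity), one_mul] at h3
  rw [h3, pow_succ]
  field_simp

open Set in
/-- For `Ỹ ~ Erlang(K, μ)`, `θ > 0`, and the threshold waiting policy `w(y) = (τ - y)⁺`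
(so that `w(Ỹ) + Ỹ = max τ Ỹ`), the Laplace-type functional
`L(τ) = E[e^{-2θ(w(Ỹ)+Ỹ)}]` equals
`e^{-2θτ} γ(μτ, K) + (μ/(μ+2θ))^K (1 - γ((2θ+μ)τ, K))`. -/
theorem laplace_functional_erlang (K : ℕ) (hK : 1 ≤ K) (μ θ : ℝ) (hμ : 0 < μ) (hθ : 0 < θ)
    (τ : ℝ) (hτ : 0 ≤ τ) :
    ∫ y in Set.Ioi (0 : ℝ),
        Real.exp (-2 * θ * max τ y) *
          (μ ^ K * y ^ (K - 1) * Real.exp (-μ * y) / ((K - 1).factorial : ℝ)) =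
      Real.exp (-2 * θ * τ) * regGamma (μ * τ) K +
        (μ / (μ + 2 * θ)) ^ K * (1 - regGamma ((2 * θ + μ) * τ) K) := by
  obtain ⟨n, rfl⟩ : ∃ n, K = n + 1 := ⟨K - 1, (Nat.succ_pred_eq_of_pos hK).symm⟩
  have hn : (n + 1) - 1 = n := rfl
  set lam := μ + 2 * θ with hlam
  have hlam_pos : 0 < lam := by positivity
  set f : ℝ → ℝ := fun y => Real.exp (-2 * θ * max τ y) *
      (μ ^ (n + 1) * y ^ n * Real.exp (-μ * y) / (n.factorial : ℝ)) with hf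
  -- pointwise forms
  have hf1 : ∀ y ∈ Ioc (0 : ℝ) τ, f y =
      (Real.exp (-2 * θ * τ) * (μ ^ (n + 1) / (n.factorial : ℝ))) *
        (y ^ n * Real.exp (-(μ * y))) := by
    intro y hy
    rw [hf]
    dsimp only
    rw [max_eq_left hy.2]
    simp only [neg_mul]
    ring
  have hf2 : ∀ y ∈ Ioi τ, f y =
      (μ ^ (n + 1) / (n.factorial : ℝ)) * (y ^ n * Real.exp (-(lam * y))) := by
    intro y hy
    rw [hf]
    dsimp only
    rw [max_eq_right (le_of_lt hy)]
    rw [show (-(lam * y) : ℝ) = -2 * θ * y + -μ * y by rw [hlam]; ring, Real.exp_add]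
    ring
  -- integrability
  have hIμ := integrableOn_pow_exp_aux n hμ
  have hIlam := integrableOn_pow_exp_aux n hlam_pos
  have hf_int1 : IntegrableOn f (Ioc 0 τ) := by
    apply IntegrableOn.congr_fun
      (((hIμ.mono_set Ioc_subset_Ioi_self).const_mul
        (Real.exp (-2 * θ * τ) * (μ ^ (n + 1) / (n.factorial : ℝ)))))
      (fun y hy => (hf1 y hy).symm) measurableSet_Ioc
  have hf_int2 : IntegrableOn f (Ioi τ) := by
    apply IntegrableOn.congr_fun
      ((hIlam.mono_set (Ioi_subset_Ioi hτ)).const_mul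
        (μ ^ (n + 1) / (n.factorial : ℝ)))
      (fun y hy => (hf2 y hy).symm) measurableSet_Ioi
  -- split
  have hsplit : ∫ y in Ioi (0 : ℝ), f y
      = (∫ y in Ioc (0 : ℝ) τ, f y) + ∫ y in Ioi τ, f y := by
    rw [← setIntegral_union (Ioc_disjoint_Ioi le_rfl) measurableSet_Ioi hf_int1 hf_int2,
      Ioc_union_Ioi_eq_Ioi hτ]
  -- piece 1
  have hpiece1 : ∫ y in Ioc (0 : ℝ) τ, f y
      = Real.exp (-2 * θ * τ) * regGamma (μ * τ) (n + 1) := by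
    rw [setIntegral_congr_fun measurableSet_Ioc hf1, integral_const_mul,
      ← intervalIntegral.integral_of_le hτ, interval_scale_aux n hμ τ,
      regGamma]
    simp only [hn]
    rw [show Real.exp (-2 * θ * τ) * (μ ^ (n + 1) / (n.factorial : ℝ)) * ((μ ^ (n + 1))⁻¹ *
        ∫ t in (0:ℝ)..(μ * τ), t ^ n * Real.exp (-t))
      = (μ ^ (n + 1) * (μ ^ (n + 1))⁻¹) * (Real.exp (-2 * θ * τ) * ((1 / (n.factorial : ℝ)) *
        ∫ t in (0:ℝ)..(μ * τ), t ^ n * Real.exp (-t))) by ring,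
      mul_inv_cancel₀ (by positivity), one_mul]
  -- piece 2
  have htail : ∫ y in Ioi τ, y ^ n * Real.exp (-(lam * y))
      = (n.factorial : ℝ) / lam ^ (n + 1)
        - (lam ^ (n + 1))⁻¹ * ∫ t in (0:ℝ)..(lam * τ), t ^ n * Real.exp (-t) := by
    have hsplit2 : ∫ y in Ioi (0 : ℝ), y ^ n * Real.exp (-(lam * y))
        = (∫ y in Ioc (0 : ℝ) τ, y ^ n * Real.exp (-(lam * y)))
          + ∫ y in Ioi τ, y ^ n * Real.exp (-(lam * y)) := by
      rw [← setIntegral_union (Ioc_disjoint_Ioi le_rfl) measurableSet_Ioi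
        (hIlam.mono_set Ioc_subset_Ioi_self) (hIlam.mono_set (Ioi_subset_Ioi hτ)),
        Ioc_union_Ioi_eq_Ioi hτ]
    rw [total_integral_aux n hlam_pos] at hsplit2
    rw [← intervalIntegral.integral_of_le hτ, interval_scale_aux n hlam_pos τ] at hsplit2
    linarith
  have hpiece2 : ∫ y in Ioi τ, f y
      = (μ / lam) ^ (n + 1) * (1 - regGamma (lam * τ) (n + 1)) := by
    rw [setIntegral_congr_fun measurableSet_Ioi hf2, integral_const_mul, htail, regGamma]
    simp only [hn]
    have hfac : (0 : ℝ) < (n.factorial : ℝ) := by positivity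
    rw [div_pow]
    field_simp
  calc ∫ y in Ioi (0 : ℝ), f y
      = (∫ y in Ioc (0 : ℝ) τ, f y) + ∫ y in Ioi τ, f y := hsplit
    _ = Real.exp (-2 * θ * τ) * regGamma (μ * τ) (n + 1) +
        (μ / (μ + 2 * θ)) ^ (n + 1) * (1 - regGamma ((2 * θ + μ) * τ) (n + 1)) := by
        rw [hpiece1, hpiece2, hlam, show μ + 2 * θ = 2 * θ + μ by ring]
end

section
/- Let g̃(x) = Σ_{k=1}^K (σ_k²/(2θ_k))·(1 - c_k·(1-ε)²e^{-2θ_k x}/(1 - ε·L_k(x))²), where L_k(x) = e^{-2θ_k x}γ(μx, K) + (μ/(μ+2θ_k))^K(1 - γ((2θ_k+μ)x, K)) and c_k = μ/(μ+2θ_k). Then g̃ is strictly increasing in x on [0,∞) for every ε ∈ [0,1), θ_k, σ_k, μ > 0. -/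
open Real Set Finset

/-- `L_k(x) = e^{-2θ_k x} γ(μx, K) + (μ/(μ+2θ_k))^K (1 - γ((2θ_k+μ)x, K))`. -/
noncomputable def Lfun (K : ℕ) (μ θ x : ℝ) : ℝ :=
  Real.exp (-2 * θ * x) * regGamma (μ * x) K +
    (μ / (μ + 2 * θ)) ^ K * (1 - regGamma ((2 * θ + μ) * x) K)

lemma regGamma_hasDerivAt (K : ℕ) (y : ℝ) :
    HasDerivAt (fun s => regGamma s K)
      ((1 / ((K - 1).factorial : ℝ)) * (y ^ (K - 1) * Real.exp (-y))) y := by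
  have hc : Continuous fun t : ℝ => t ^ (K - 1) * Real.exp (-t) := by continuity
  have h : HasDerivAt (fun s : ℝ => ∫ t in (0:ℝ)..s, t ^ (K-1) * Real.exp (-t))
      (y ^ (K-1) * Real.exp (-y)) y :=
    intervalIntegral.integral_hasDerivAt_right (hc.intervalIntegrable _ _)
      (hc.stronglyMeasurableAtFilter _ _) hc.continuousAt
  simpa [regGamma] using h.const_mul (1 / ((K - 1).factorial : ℝ))

lemma regGamma_nonneg (K : ℕ) {y : ℝ} (hy : 0 ≤ y) : 0 ≤ regGamma y K := by
  have : 0 ≤ ∫ t in (0:ℝ)..y, t ^ (K-1) * Real.exp (-t) := by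
    apply intervalIntegral.integral_nonneg hy
    intro t ht
    exact mul_nonneg (pow_nonneg ht.1 _) (Real.exp_pos _).le
  have h0 : 0 ≤ (1 / ((K - 1).factorial : ℝ)) := by positivity
  exact mul_nonneg h0 this

lemma Lfun_hasDerivAt (K : ℕ) (hK : 1 ≤ K) {μ θ : ℝ} (hμ : 0 < μ) (hθ : 0 < θ) (x : ℝ) :
    HasDerivAt (Lfun K μ θ) (-(2*θ) * Real.exp (-2*θ*x) * regGamma (μ*x) K) x := by
  obtain ⟨n, rfl⟩ : ∃ n, K = n + 1 := ⟨K - 1, (Nat.succ_pred_eq_of_pos hK).symm⟩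
  have hne : μ + 2 * θ ≠ 0 := by positivity
  have hE : HasDerivAt (fun x : ℝ => Real.exp (-2*θ*x)) (Real.exp (-2*θ*x) * (-2*θ)) x := by
    have h1 : HasDerivAt (fun x : ℝ => -2*θ*x) (-2*θ) x := by
      simpa using (hasDerivAt_id x).const_mul (-2*θ)
    exact h1.exp
  have hG1 : HasDerivAt (fun x : ℝ => regGamma (μ*x) (n+1))
      ((1 / (n.factorial : ℝ)) * ((μ*x) ^ n * Real.exp (-(μ*x))) * μ) x := by
    have h1 : HasDerivAt (fun x : ℝ => μ * x) μ x := by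
      simpa using (hasDerivAt_id x).const_mul μ
    simpa [Function.comp_def] using ((regGamma_hasDerivAt (n+1) (μ*x)).comp x h1)
  have hG2 : HasDerivAt (fun x : ℝ => regGamma ((2*θ+μ)*x) (n+1))
      ((1 / (n.factorial : ℝ)) * (((2*θ+μ)*x) ^ n * Real.exp (-((2*θ+μ)*x))) * (2*θ+μ)) x := by
    have h1 : HasDerivAt (fun x : ℝ => (2*θ+μ) * x) (2*θ+μ) x := by
      simpa using (hasDerivAt_id x).const_mul (2*θ+μ)
    simpa [Function.comp_def] using ((regGamma_hasDerivAt (n+1) ((2*θ+μ)*x)).comp x h1)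
  have total := (hE.mul hG1).add
    (((hasDerivAt_const x (1:ℝ)).sub hG2).const_mul ((μ / (μ + 2 * θ)) ^ (n+1)))
  have key : Real.exp (-2*θ*x) * ((1 / (n.factorial : ℝ)) * ((μ*x) ^ n * Real.exp (-(μ*x))) * μ)
      = (μ / (μ + 2 * θ)) ^ (n+1) *
        ((1 / (n.factorial : ℝ)) * (((2*θ+μ)*x) ^ n * Real.exp (-((2*θ+μ)*x))) * (2*θ+μ)) := by
    have hexp : Real.exp (-2*θ*x) * Real.exp (-(μ*x)) = Real.exp (-((2*θ+μ)*x)) := by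
      rw [← Real.exp_add]; ring_nf
    rw [mul_pow, mul_pow, div_pow, ← hexp]
    field_simp
    ring
  refine total.congr_deriv ?_
  simp only [zero_sub]
  ring_nf
  ring_nf at key
  linarith [key]

lemma Lfun_antitoneOn (K : ℕ) (hK : 1 ≤ K) {μ θ : ℝ} (hμ : 0 < μ) (hθ : 0 < θ) :
    AntitoneOn (Lfun K μ θ) (Set.Ici 0) := by
  apply antitoneOn_of_deriv_nonpos (convex_Ici 0)
  · exact fun x _ => (Lfun_hasDerivAt K hK hμ hθ x).continuousAt.continuousWithinAt
  · exact fun x _ => (Lfun_hasDerivAt K hK hμ hθ x).differentiableAt.differentiableWithinAt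
  · intro x hx
    rw [interior_Ici] at hx
    have hx' : (0:ℝ) < x := hx
    rw [(Lfun_hasDerivAt K hK hμ hθ x).deriv]
    have hG : 0 ≤ regGamma (μ*x) K := regGamma_nonneg K (by positivity)
    have : 0 ≤ (2*θ) * Real.exp (-2*θ*x) * regGamma (μ*x) K :=
      mul_nonneg (by positivity) hG
    linarith

lemma Lfun_le_one (K : ℕ) (hK : 1 ≤ K) {μ θ : ℝ} (hμ : 0 < μ) (hθ : 0 < θ)
    {x : ℝ} (hx : 0 ≤ x) : Lfun K μ θ x ≤ 1 := by
  have h0 : Lfun K μ θ 0 = (μ / (μ + 2 * θ)) ^ K := by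
    simp [Lfun, regGamma]
  have hle : Lfun K μ θ x ≤ Lfun K μ θ 0 :=
    Lfun_antitoneOn K hK hμ hθ (by simp) hx hx
  have hc1 : μ / (μ + 2 * θ) ≤ 1 := by
    rw [div_le_one (by positivity)]; linarith
  have hc0 : 0 ≤ μ / (μ + 2 * θ) := by positivity
  calc Lfun K μ θ x ≤ (μ / (μ + 2 * θ)) ^ K := h0 ▸ hle
    _ ≤ 1 := pow_le_one₀ hc0 hc1

/-- The function
`g̃(x) = Σ_k (σ_k²/(2θ_k)) (1 - c_k (1-ε)² e^{-2θ_k x} / (1 - ε L_k(x))²)`,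
with `c_k = μ/(μ+2θ_k)`, is strictly increasing on `[0, ∞)` for every `ε ∈ [0,1)` and
`θ_k, σ_k, μ > 0`. -/
theorem g_tilde_strictMono (K : ℕ) (hK : 1 ≤ K) (μ : ℝ) (hμ : 0 < μ)
    (ε : ℝ) (hε0 : 0 ≤ ε) (hε1 : ε < 1)
    (θ σ : Fin K → ℝ) (hθ : ∀ k, 0 < θ k) (hσ : ∀ k, 0 < σ k) :
    StrictMonoOn (fun x : ℝ =>
      ∑ k : Fin K, σ k ^ 2 / (2 * θ k) *
        (1 - (μ / (μ + 2 * θ k)) * (1 - ε) ^ 2 * Real.exp (-2 * θ k * x) /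
          (1 - ε * Lfun K μ (θ k) x) ^ 2)) (Set.Ici 0) := by
  intro x hx y hy hxy
  have hne : Nonempty (Fin K) := ⟨⟨0, hK⟩⟩
  apply Finset.sum_lt_sum_of_nonempty Finset.univ_nonempty
  intro k _
  have hθk := hθ k
  -- positivity of denominators
  have hden : ∀ z : ℝ, 0 ≤ z → 0 < 1 - ε * Lfun K μ (θ k) z := by
    intro z hz
    have hL1 : Lfun K μ (θ k) z ≤ 1 := Lfun_le_one K hK hμ hθk hz
    nlinarith
  have hdx := hden x hx
  have hdy := hden y hy
  have hLmono : Lfun K μ (θ k) y ≤ Lfun K μ (θ k) x :=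
    Lfun_antitoneOn K hK hμ hθk hx hy hxy.le
  have hDle : (1 - ε * Lfun K μ (θ k) x) ^ 2 ≤ (1 - ε * Lfun K μ (θ k) y) ^ 2 := by
    apply pow_le_pow_left₀ hdx.le
    nlinarith
  have hNlt : Real.exp (-2 * θ k * y) < Real.exp (-2 * θ k * x) := by
    apply Real.exp_lt_exp.mpr; nlinarith
  have hc : 0 < μ / (μ + 2 * θ k) := by positivity
  have h1ε : 0 < 1 - ε := by linarith
  have hNpos : 0 < (μ / (μ + 2 * θ k)) * (1 - ε) ^ 2 * Real.exp (-2 * θ k * y) :=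
    mul_pos (mul_pos hc (pow_pos h1ε 2)) (Real.exp_pos _)
  have hAlt : (μ / (μ + 2 * θ k)) * (1 - ε) ^ 2 * Real.exp (-2 * θ k * y) /
      (1 - ε * Lfun K μ (θ k) y) ^ 2 <
      (μ / (μ + 2 * θ k)) * (1 - ε) ^ 2 * Real.exp (-2 * θ k * x) /
      (1 - ε * Lfun K μ (θ k) x) ^ 2 := by
    calc (μ / (μ + 2 * θ k)) * (1 - ε) ^ 2 * Real.exp (-2 * θ k * y) /
        (1 - ε * Lfun K μ (θ k) y) ^ 2
        ≤ (μ / (μ + 2 * θ k)) * (1 - ε) ^ 2 * Real.exp (-2 * θ k * y) /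
          (1 - ε * Lfun K μ (θ k) x) ^ 2 :=
          div_le_div_of_nonneg_left hNpos.le (by positivity) hDle
      _ < (μ / (μ + 2 * θ k)) * (1 - ε) ^ 2 * Real.exp (-2 * θ k * x) /
          (1 - ε * Lfun K μ (θ k) x) ^ 2 := by
          apply (div_lt_div_iff_of_pos_right (pow_pos hdx 2)).mpr
          exact mul_lt_mul_of_pos_left hNlt (mul_pos hc (pow_pos h1ε 2))
  have hσk : 0 < σ k := hσ k
  have hcoef : 0 < σ k ^ 2 / (2 * θ k) := by positivity
  have := mul_lt_mul_of_pos_left (sub_lt_sub_left hAlt 1) hcoef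
  simpa using this
end
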